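/- arXiv:2505.12436 — 2 statements merged into one kernel-verified Lean document; each statement's English description precedes it below -/
import Mathlib

section
/- The timed step simulation preorder is a precongruence for parallel composition: let T₁, T₂, T₃ be TTSBs with T₁ and T₂ comparable, T₁ ≼ T₂, and both T₁ and T₂ compatible with T₃; then T₁‖T₃ ≼ T₂‖T₃. -/
open Classical

noncomputable section

namespace TTSBpaper

/-! ### Partial functions / valuations -/

/-- The domain of a partial function. -/
def dom {α β : Type*} (f : α → Option β) : Set α := {x | f x ≠ none}

/-- The override operator. -/
def override {α β : Type*} (f g : α → Option β) : α → Option β :=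
  fun x => if x ∈ dom f then f x else g x

/-- Restriction of a partial function to a set. -/
def restrictV {α β : Type*} (f : α → Option β) (X : Set α) : α → Option β :=
  fun x => if x ∈ X then f x else none

/-- Compatibility of partial functions. -/
def compatV {α β : Type*} (f g : α → Option β) : Prop :=
  ∀ x ∈ dom f ∩ dom g, f x = g x

/-- Update of f according to g. -/
def updV {α β : Type*} (f g : α → Option β) : α → Option β :=
  restrictV (override g f) (dom f)

/-- A property P (a set of valuations over V) does not depend on the variables in W. -/
def indep {α β : Type*} (V W : Set α) (P : Set (α → Option β)) : Prop :=
  ∀ v u, dom v = V → dom u = W → (v ∈ P ↔ updV v u ∈ P)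

variable {Var Data BCh CCh : Type}

/-- Values: nonnegative reals for clocks, plus arbitrary data. -/
abbrev Value (Data : Type) : Type := NNReal ⊕ Data

/-- Valuations over a universal set of variables, as partial functions. -/
abbrev Valn (Var Data : Type) : Type := Var → Option (Value Data)

/-- Singleton valuation. -/
def single (x : Var) (v : Value Data) : Valn Var Data :=
  fun y => if y = x then some v else none

/-- Time shift v ⊕ d : all clocks (variables in X) advance by d. -/
def oplus (X : Set Var) (v : Valn Var Data) (d : NNReal) : Valn Var Data :=
  fun y => if y ∈ X then (v y).map (Sum.map (fun r => r + d) id) else v y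

/-- A property is left-closed w.r.t. time passage. -/
def leftClosed (X : Set Var) (P : Set (Valn Var Data)) : Prop :=
  ∀ v d, oplus X v d ∈ P → v ∈ P

/-! ### Actions -/

/-- Actions: broadcast output/input, binary output/input, internal, and time passage. -/
inductive Act (BCh CCh : Type) : Type where
  | bsend : BCh → Act BCh CCh
  | brecv : BCh → Act BCh CCh
  | send : CCh → Act BCh CCh
  | recv : CCh → Act BCh CCh
  | tau : Act BCh CCh
  | delay : NNReal → Act BCh CCh

/-- Binary actions. -/
def Act.isBinary : Act BCh CCh → Prop
  | .send _ => True
  | .recv _ => True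
  | _ => False

/-- Binary or broadcast actions. -/
def Act.isSync : Act BCh CCh → Prop
  | .send _ => True
  | .recv _ => True
  | .bsend _ => True
  | .brecv _ => True
  | _ => False

/-- Actions removed by restriction to channel sets Cb, Cc. -/
def Act.removedBy (Cb : Set BCh) (Cc : Set CCh) : Act BCh CCh → Prop
  | .brecv d => d ∈ Cb
  | .send c => c ∈ Cc
  | .recv c => c ∈ Cc
  | _ => False

/-- Actions whose label is kept unchanged by restriction to channel sets Cb, Cc. -/
def Act.keptBy (Cb : Set BCh) (Cc : Set CCh) : Act BCh CCh → Prop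
  | .bsend d => d ∉ Cb
  | .brecv d => d ∉ Cb
  | .send c => c ∉ Cc
  | .recv c => c ∉ Cc
  | _ => True

/-! ### Timed transition systems with broadcast actions -/

/-- The data of a TTSB: external/internal variables, states, initial state and
committed (`true`) / uncommitted (`false`) transition relations. -/
structure PreTTSB (Var Data BCh CCh : Type) : Type where
  E : Set Var
  H : Set Var
  S : Set (Valn Var Data)
  init : Valn Var Data
  Tr : Bool → Valn Var Data → Act BCh CCh → Valn Var Data → Prop

/-- The variables of a TTSB. -/
def PreTTSB.V (T : PreTTSB Var Data BCh CCh) : Set Var := T.E ∪ T.H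

/-- A state is committed iff some committed transition starts in it. -/
def PreTTSB.Comm (T : PreTTSB Var Data BCh CCh) (s : Valn Var Data) : Prop :=
  ∃ a t, T.Tr true s a t

/-- `T` is a timed transition system with broadcast actions (with clock set `X`):
well-formedness plus Axioms I–VI of the paper. -/
structure IsTTSB (X : Set Var) (T : PreTTSB Var Data BCh CCh) : Prop where
  disjEH : Disjoint T.E T.H
  statesDom : ∀ s ∈ T.S, dom s = T.V
  initMem : T.init ∈ T.S
  trMem : ∀ {b s a t}, T.Tr b s a t → s ∈ T.S ∧ t ∈ T.S
  trDisj : ∀ s a t, ¬ (T.Tr true s a t ∧ T.Tr false s a t)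
  axI : ∀ {s a t b a' t'}, T.Tr true s a t → T.Tr b s a' t' →
      a'.isSync ∨ (a' = Act.tau ∧ b = true)
  axII : ∀ {s} (u : Valn Var Data), s ∈ T.S → dom u = T.E → updV s u ∈ T.S
  axIIIc : ∀ {b s t} (u : Valn Var Data) (c : CCh), dom u = T.E →
      T.Tr b s (Act.recv c) t → ∃ t', T.Tr b (updV s u) (Act.recv c) t'
  axIIIb : ∀ {b s t} (u : Valn Var Data) (d : BCh), dom u = T.E →
      T.Tr b s (Act.brecv d) t → ∃ t', T.Tr b (updV s u) (Act.brecv d) t'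
  axIV : ∀ {s d t}, T.Tr false s (Act.delay d) t → t = oplus X s d
  axV : ∀ (d : BCh), ∀ s ∈ T.S, ∃ b t, T.Tr b s (Act.brecv d) t
  axVI : ∀ {b s t} (d : BCh), T.Tr b s (Act.brecv d) t →
      restrictV s T.E = restrictV t T.E

/-- Compatibility of two TTSBs. -/
def Compatible (T1 T2 : PreTTSB Var Data BCh CCh) : Prop :=
  T1.H ∩ T2.V = ∅ ∧ T2.H ∩ T1.V = ∅ ∧ compatV T1.init T2.init

/-- Comparability of two TTSBs. -/
def Comparable (T1 T2 : PreTTSB Var Data BCh CCh) : Prop := T1.E = T2.E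

/-- The transition relations of the parallel composition of two TTSBs
(rules EXT, TAU, SYNC, TIME, SND, RCV of the paper, in both directions). -/
inductive ParTr (T1 T2 : PreTTSB Var Data BCh CCh) :
    Bool → Valn Var Data → Act BCh CCh → Valn Var Data → Prop where
  | ext₁ {r s r' : Valn Var Data} {a : Act BCh CCh} {b : Bool}
      (hr : r ∈ T1.S) (hs : s ∈ T2.S) (hc : compatV r s)
      (ha : a.isBinary) (ht : T1.Tr b r a r') :
      ParTr T1 T2 b (override r s) a (override r' s)
  | ext₂ {r s s' : Valn Var Data} {a : Act BCh CCh} {b : Bool}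
      (hr : r ∈ T1.S) (hs : s ∈ T2.S) (hc : compatV r s)
      (ha : a.isBinary) (ht : T2.Tr b s a s') :
      ParTr T1 T2 b (override r s) a (override s' r)
  | tau₁ {r s r' : Valn Var Data} {b : Bool}
      (hr : r ∈ T1.S) (hs : s ∈ T2.S) (hc : compatV r s)
      (ht : T1.Tr b r Act.tau r') (hcm : T2.Comm s → b = true) :
      ParTr T1 T2 b (override r s) Act.tau (override r' s)
  | tau₂ {r s s' : Valn Var Data} {b : Bool}
      (hr : r ∈ T1.S) (hs : s ∈ T2.S) (hc : compatV r s)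
      (ht : T2.Tr b s Act.tau s') (hcm : T1.Comm r → b = true) :
      ParTr T1 T2 b (override r s) Act.tau (override s' r)
  | sync₁ {r s r' s' : Valn Var Data} {c : CCh} {b b' : Bool}
      (hr : r ∈ T1.S) (hs : s ∈ T2.S) (hc : compatV r s)
      (ht1 : T1.Tr b r (Act.send c) r') (ht2 : T2.Tr b' (updV s r') (Act.recv c) s')
      (hcm : (T1.Comm r ∨ T2.Comm s) → (b || b') = true) :
      ParTr T1 T2 (b || b') (override r s) Act.tau (override s' r')
  | sync₂ {r s r' s' : Valn Var Data} {c : CCh} {b b' : Bool}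
      (hr : r ∈ T1.S) (hs : s ∈ T2.S) (hc : compatV r s)
      (ht1 : T2.Tr b s (Act.send c) s') (ht2 : T1.Tr b' (updV r s') (Act.recv c) r')
      (hcm : (T2.Comm s ∨ T1.Comm r) → (b || b') = true) :
      ParTr T1 T2 (b || b') (override r s) Act.tau (override r' s')
  | time₁ {r s r' s' : Valn Var Data} {d : NNReal}
      (hr : r ∈ T1.S) (hs : s ∈ T2.S) (hc : compatV r s)
      (ht1 : T1.Tr false r (Act.delay d) r') (ht2 : T2.Tr false s (Act.delay d) s') :
      ParTr T1 T2 false (override r s) (Act.delay d) (override r' s')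
  | time₂ {r s r' s' : Valn Var Data} {d : NNReal}
      (hr : r ∈ T1.S) (hs : s ∈ T2.S) (hc : compatV r s)
      (ht1 : T2.Tr false s (Act.delay d) s') (ht2 : T1.Tr false r (Act.delay d) r') :
      ParTr T1 T2 false (override r s) (Act.delay d) (override s' r')
  | snd₁ {r s r' s' : Valn Var Data} {δ : BCh} {b b' : Bool}
      (hr : r ∈ T1.S) (hs : s ∈ T2.S) (hc : compatV r s)
      (ht1 : T1.Tr b r (Act.bsend δ) r') (ht2 : T2.Tr b' (updV s r') (Act.brecv δ) s') :
      ParTr T1 T2 (b || b') (override r s) (Act.bsend δ) (override r' s')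
  | snd₂ {r s r' s' : Valn Var Data} {δ : BCh} {b b' : Bool}
      (hr : r ∈ T1.S) (hs : s ∈ T2.S) (hc : compatV r s)
      (ht1 : T2.Tr b s (Act.bsend δ) s') (ht2 : T1.Tr b' (updV r s') (Act.brecv δ) r') :
      ParTr T1 T2 (b || b') (override r s) (Act.bsend δ) (override s' r')
  | rcv₁ {r s r' s' : Valn Var Data} {δ : BCh} {b b' : Bool}
      (hr : r ∈ T1.S) (hs : s ∈ T2.S) (hc : compatV r s)
      (ht1 : T1.Tr b r (Act.brecv δ) r') (ht2 : T2.Tr b' s (Act.brecv δ) s') :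
      ParTr T1 T2 (b || b') (override r s) (Act.brecv δ) (override r' s')
  | rcv₂ {r s r' s' : Valn Var Data} {δ : BCh} {b b' : Bool}
      (hr : r ∈ T1.S) (hs : s ∈ T2.S) (hc : compatV r s)
      (ht1 : T2.Tr b s (Act.brecv δ) s') (ht2 : T1.Tr b' r (Act.brecv δ) r') :
      ParTr T1 T2 (b || b') (override r s) (Act.brecv δ) (override s' r')

/-- Parallel composition of TTSBs. -/
def par (T1 T2 : PreTTSB Var Data BCh CCh) : PreTTSB Var Data BCh CCh where
  E := T1.E ∪ T2.E
  H := T1.H ∪ T2.H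
  S := {v | ∃ r ∈ T1.S, ∃ s ∈ T2.S, compatV r s ∧ v = override r s}
  init := override T1.init T2.init
  Tr := ParTr T1 T2

/-- n-ary (left-associated) parallel composition. -/
def parAll (T : PreTTSB Var Data BCh CCh) (Ts : List (PreTTSB Var Data BCh CCh)) :
    PreTTSB Var Data BCh CCh :=
  Ts.foldl par T

/-- The restriction operator on TTSBs: channels in Cb/Cc and external variables in Ce
are internalized, following Definition 10 of the paper. -/
def restr (T : PreTTSB Var Data BCh CCh) (Cb : Set BCh) (Cc : Set CCh) (Ce : Set Var) :
    PreTTSB Var Data BCh CCh where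
  E := T.E \ Ce
  H := T.H ∪ (T.E ∩ Ce)
  S := T.S
  init := T.init
  Tr := fun b s a t =>
    (T.Tr b s a t ∧ Act.keptBy Cb Cc a) ∨
    (a = Act.tau ∧ ∃ δ ∈ Cb, T.Tr b s (Act.bsend δ) t ∧ (T.Comm s → b = true))

/-- Broadcast channels enabled in the transitions of T. -/
def enabledB (T : PreTTSB Var Data BCh CCh) : Set BCh :=
  {δ | ∃ b s t, T.Tr b s (Act.bsend δ) t ∨ T.Tr b s (Act.brecv δ) t}

/-- Binary channels enabled in the transitions of T. -/
def enabledC (T : PreTTSB Var Data BCh CCh) : Set CCh :=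
  {c | ∃ b s t, T.Tr b s (Act.send c) t ∨ T.Tr b s (Act.recv c) t}

/-! ### Timed step simulation -/

/-- R is a timed step simulation from T1 to T2 (Definition 11 of the paper). -/
structure IsTimedStepSim (T1 T2 : PreTTSB Var Data BCh CCh)
    (R : Valn Var Data → Valn Var Data → Prop) : Prop where
  mem : ∀ {r s}, R r s → r ∈ T1.S ∧ s ∈ T2.S
  initR : R T1.init T2.init
  extEq : ∀ {r s}, R r s → restrictV r T1.E = restrictV s T2.E
  updR : ∀ {r s} (u : Valn Var Data), R r s → dom u = T1.E → R (updV r u) (updV s u)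
  commR : ∀ {r s}, R r s → T2.Comm s → T1.Comm r
  stepR : ∀ {r s b a r'}, R r s → T1.Tr b r a r' →
      (∃ s', T2.Tr b s a s' ∧ R r' s') ∨ (a = Act.tau ∧ R r' s)

/-- T1 ≼ T2 : some timed step simulation from T1 to T2 exists. -/
def simLE (T1 T2 : PreTTSB Var Data BCh CCh) : Prop :=
  ∃ R, IsTimedStepSim T1 T2 R

/-! ### Timed automata -/

/-- Edge labels of timed automata (actions without time passage). -/
inductive ELab (BCh CCh : Type) : Type where
  | bsend : BCh → ELab BCh CCh
  | brecv : BCh → ELab BCh CCh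
  | send : CCh → ELab BCh CCh
  | recv : CCh → ELab BCh CCh
  | tau : ELab BCh CCh

/-- Edge labels as actions. -/
def ELab.toAct : ELab BCh CCh → Act BCh CCh
  | .bsend δ => .bsend δ
  | .brecv δ => .brecv δ
  | .send c => .send c
  | .recv c => .recv c
  | .tau => .tau

/-- A timed automaton: locations (a set of data values), committed locations, initial
location, external/internal variables, initial valuation, invariants, transitions
(location, guard, action, update function, location) and urgent transitions. -/
structure TA (Var Data BCh CCh : Type) : Type where
  L : Set Data
  K : Set Data
  l0 : Data
  E : Set Var
  H : Set Var
  v0 : Valn Var Data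
  Inv : Data → Set (Valn Var Data)
  Tr : Data → Set (Valn Var Data) → ELab BCh CCh →
      (Valn Var Data → Valn Var Data) → Data → Prop
  UTr : Data → Set (Valn Var Data) → ELab BCh CCh →
      (Valn Var Data → Valn Var Data) → Data → Prop

/-- The variables of a timed automaton. -/
def TA.V (A : TA Var Data BCh CCh) : Set Var := A.E ∪ A.H

/-- Well-formedness of a timed automaton, together with Axioms VII–XI of the paper
(clock set X). -/
structure TAok (X : Set Var) (A : TA Var Data BCh CCh) : Prop where
  disjEH : Disjoint A.E A.H
  l0mem : A.l0 ∈ A.L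
  Ksub : A.K ⊆ A.L
  v0dom : dom A.v0 = A.V
  v0inv : restrictV A.v0 A.V ∈ A.Inv A.l0
  invLC : ∀ l, leftClosed X (A.Inv l)
  urgSub : ∀ {l g a ρ l'}, A.UTr l g a ρ l' → A.Tr l g a ρ l'
  trLoc : ∀ {l g a ρ l'}, A.Tr l g a ρ l' → l ∈ A.L ∧ l' ∈ A.L
  updDom : ∀ {l g a ρ l'}, A.Tr l g a ρ l' → ∀ v, dom v = A.V → dom (ρ v) = A.V
  axVII : ∀ l, indep A.V A.E (A.Inv l)
  axVIIIc : ∀ {l g ρ l'} (c : CCh), A.Tr l g (ELab.recv c) ρ l' → indep A.V A.E g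
  axVIIIb : ∀ {l g ρ l'} (δ : BCh), A.Tr l g (ELab.brecv δ) ρ l' → indep A.V A.E g
  axIX : ∀ {l}, l ∈ A.K → ∀ v, dom v = A.V → v ∈ A.Inv l →
      ∃ g a ρ l', A.Tr l g a ρ l' ∧ v ∈ g ∧ ρ v ∈ A.Inv l'
  axX : ∀ {l g a ρ l'}, A.UTr l g a ρ l' → a = ELab.tau ∧ indep A.V (A.V ∩ X) g
  axXI : ∀ {l g ρ l'} (δ : BCh), A.Tr l g (ELab.brecv δ) ρ l' →
      ∀ v, restrictV (ρ v) A.E = restrictV v A.E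

/-- States of the TTSB associated to a TA with location variable ℓ. -/
def taState (A : TA Var Data BCh CCh) (ℓ : Var) : Set (Valn Var Data) :=
  {v | dom v = A.V ∪ {ℓ} ∧
    ∃ l ∈ A.L, v ℓ = some (Sum.inr l) ∧ restrictV v A.V ∈ A.Inv l}

/-- Application of an update function ρ : Val(V) → Val(V) to a larger state. -/
def applyU (A : TA Var Data BCh CCh) (ρ : Valn Var Data → Valn Var Data)
    (s : Valn Var Data) : Valn Var Data :=
  updV s (ρ (restrictV s A.V))

/-- The transition relations of the TTSB associated to a TA
(rules ACT, TIME and VIRT of the paper). -/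
inductive TATrans (X : Set Var) (A : TA Var Data BCh CCh) (ℓ : Var) :
    Bool → Valn Var Data → Act BCh CCh → Valn Var Data → Prop where
  | act {s : Valn Var Data} {l : Data} {g : Set (Valn Var Data)} {a : ELab BCh CCh}
      {ρ : Valn Var Data → Valn Var Data} {l' : Data} {b : Bool}
      (hs : s ∈ taState A ℓ) (hl : s ℓ = some (Sum.inr l))
      (ht : A.Tr l g a ρ l') (hg : restrictV s A.V ∈ g)
      (hb : b = true ↔ l ∈ A.K)
      (hs' : updV (applyU A ρ s) (single ℓ (Sum.inr l')) ∈ taState A ℓ) :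
      TATrans X A ℓ b s a.toAct (updV (applyU A ρ s) (single ℓ (Sum.inr l')))
  | time {s : Valn Var Data} {l : Data} {d : NNReal}
      (hs : s ∈ taState A ℓ) (hl : s ℓ = some (Sum.inr l)) (hK : l ∉ A.K)
      (hs' : oplus X s d ∈ taState A ℓ)
      (hurg : ∀ d' : NNReal, d' ≤ d → ∀ g ρ l', A.UTr l g ELab.tau ρ l' →
          restrictV (oplus X s d') A.V ∉ g) :
      TATrans X A ℓ false s (Act.delay d) (oplus X s d)
  | virt {s : Valn Var Data} {l : Data} (δ : BCh)
      (hs : s ∈ taState A ℓ) (hl : s ℓ = some (Sum.inr l))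
      (hno : ∀ g ρ l', A.Tr l g (ELab.brecv δ) ρ l' → restrictV s A.V ∉ g) :
      TATrans X A ℓ false s (Act.brecv δ) s

/-- The TTSB associated to a timed automaton. -/
def TTSBof (X : Set Var) (A : TA Var Data BCh CCh) (ℓ : Var) :
    PreTTSB Var Data BCh CCh where
  E := A.E
  H := A.H ∪ {ℓ}
  S := taState A ℓ
  init := override A.v0 (single ℓ (Sum.inr A.l0))
  Tr := TATrans X A ℓ

/-! ### Networks of timed automata and their non-compositional semantics -/

/-- A network component: a timed automaton together with its (fresh) location variable. -/
abbrev Comp (Var Data BCh CCh : Type) : Type := TA Var Data BCh CCh × Var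

/-- The variables of a component, including its location variable. -/
def compW (c : Comp Var Data BCh CCh) : Set Var := c.1.V ∪ {c.2}

/-- The TTSB associated to a component. -/
def TTSBofC (X : Set Var) (c : Comp Var Data BCh CCh) : PreTTSB Var Data BCh CCh :=
  TTSBof X c.1 c.2

/-- All variables of a network. -/
def NTAvars (N : List (Comp Var Data BCh CCh)) : Set Var :=
  {x | ∃ c ∈ N, x ∈ compW c}

/-- The states of the non-compositional (UPPAAL) semantics of a network. -/
def NTAstates (N : List (Comp Var Data BCh CCh)) : Set (Valn Var Data) :=
  {v | dom v = NTAvars N ∧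
    ∀ c ∈ N, ∃ l ∈ c.1.L, v c.2 = some (Sum.inr l) ∧ restrictV v c.1.V ∈ c.1.Inv l}

/-- The initial state of the non-compositional semantics of a network. -/
def NTAinit (N : List (Comp Var Data BCh CCh)) : Valn Var Data :=
  N.foldr (fun c w => override (override c.1.v0 (single c.2 (Sum.inr c.1.l0))) w)
    (fun _ => none)

/-- A component is in a committed location at state s. -/
def atCommitted (c : Comp Var Data BCh CCh) (s : Valn Var Data) : Prop :=
  ∃ l ∈ c.1.K, s c.2 = some (Sum.inr l)

/-- No component of the network is in a committed location. -/
def noneCommitted (N : List (Comp Var Data BCh CCh)) (s : Valn Var Data) : Prop :=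
  ∀ c ∈ N, ¬ atCommitted c s

/-- Application of a component update function to a network state. -/
def applyC (c : Comp Var Data BCh CCh) (ρ : Valn Var Data → Valn Var Data)
    (s : Valn Var Data) : Valn Var Data :=
  updV s (ρ (restrictV s c.1.V))

/-- j ∈ RS(δ, i, s): component j (≠ i) has an executable δ?-transition in s. -/
def RSmem (N : List (Comp Var Data BCh CCh)) (δ : BCh) (i : ℕ) (s : Valn Var Data)
    (j : ℕ) : Prop :=
  j ≠ i ∧ ∃ (hj : j < N.length), ∃ l g ρ l',
    s (N.get ⟨j, hj⟩).2 = some (Sum.inr l) ∧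
    (N.get ⟨j, hj⟩).1.Tr l g (ELab.brecv δ) ρ l' ∧
    restrictV s (N.get ⟨j, hj⟩).1.V ∈ g

/-- Apply the chosen receiver updates in index order (left-to-right). -/
def bcastUpds (N : List (Comp Var Data BCh CCh)) (δ : BCh) (i : ℕ) (s0 : Valn Var Data)
    (ρs : ℕ → Valn Var Data → Valn Var Data) (v : Valn Var Data) : Valn Var Data :=
  (List.range N.length).foldl
    (fun w j =>
      if hj : j < N.length then
        if RSmem N δ i s0 j then applyC (N.get ⟨j, hj⟩) (ρs j) w else w
      else w) v

/-- Update the location variables of all receivers. -/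
def bcastLocs (N : List (Comp Var Data BCh CCh)) (δ : BCh) (i : ℕ) (s0 : Valn Var Data)
    (ls' : ℕ → Data) (v : Valn Var Data) : Valn Var Data :=
  (List.range N.length).foldl
    (fun w j =>
      if hj : j < N.length then
        if RSmem N δ i s0 j then
          updV w (single (N.get ⟨j, hj⟩).2 (Sum.inr (ls' j)))
        else w
      else w) v

/-- The non-compositional (UPPAAL) transition relation of a network
(rules TAU, SYNC, TIME and BCST of the paper). -/
inductive NTATr (X : Set Var) (N : List (Comp Var Data BCh CCh)) :
    Valn Var Data → Act BCh CCh → Valn Var Data → Prop where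
  | tau {s : Valn Var Data} {i : ℕ} (hi : i < N.length)
      {l : Data} {g : Set (Valn Var Data)} {ρ : Valn Var Data → Valn Var Data} {l' : Data}
      (hs : s ∈ NTAstates N)
      (hl : s (N.get ⟨i, hi⟩).2 = some (Sum.inr l))
      (ht : (N.get ⟨i, hi⟩).1.Tr l g ELab.tau ρ l')
      (hg : restrictV s (N.get ⟨i, hi⟩).1.V ∈ g)
      (hcomm : noneCommitted N s ∨ l ∈ (N.get ⟨i, hi⟩).1.K)
      (hs' : updV (applyC (N.get ⟨i, hi⟩) ρ s)
          (single (N.get ⟨i, hi⟩).2 (Sum.inr l')) ∈ NTAstates N) :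
      NTATr X N s Act.tau
        (updV (applyC (N.get ⟨i, hi⟩) ρ s) (single (N.get ⟨i, hi⟩).2 (Sum.inr l')))
  | sync {s : Valn Var Data} {i j : ℕ} (hi : i < N.length) (hj : j < N.length)
      (hij : i ≠ j) {li lj li' lj' : Data} {gi gj : Set (Valn Var Data)}
      {ρi ρj : Valn Var Data → Valn Var Data} {c : CCh}
      (hs : s ∈ NTAstates N)
      (hli : s (N.get ⟨i, hi⟩).2 = some (Sum.inr li))
      (hlj : s (N.get ⟨j, hj⟩).2 = some (Sum.inr lj))
      (hti : (N.get ⟨i, hi⟩).1.Tr li gi (ELab.send c) ρi li')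
      (htj : (N.get ⟨j, hj⟩).1.Tr lj gj (ELab.recv c) ρj lj')
      (hgi : restrictV s (N.get ⟨i, hi⟩).1.V ∈ gi)
      (hgj : restrictV s (N.get ⟨j, hj⟩).1.V ∈ gj)
      (hcomm : noneCommitted N s ∨ li ∈ (N.get ⟨i, hi⟩).1.K ∨ lj ∈ (N.get ⟨j, hj⟩).1.K)
      (hs' : updV (updV (applyC (N.get ⟨j, hj⟩) ρj (applyC (N.get ⟨i, hi⟩) ρi s))
          (single (N.get ⟨i, hi⟩).2 (Sum.inr li')))
          (single (N.get ⟨j, hj⟩).2 (Sum.inr lj')) ∈ NTAstates N) :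
      NTATr X N s Act.tau
        (updV (updV (applyC (N.get ⟨j, hj⟩) ρj (applyC (N.get ⟨i, hi⟩) ρi s))
          (single (N.get ⟨i, hi⟩).2 (Sum.inr li')))
          (single (N.get ⟨j, hj⟩).2 (Sum.inr lj')))
  | time {s : Valn Var Data} {d : NNReal}
      (hs : s ∈ NTAstates N) (hs' : oplus X s d ∈ NTAstates N)
      (hK : noneCommitted N s)
      (hurg : ¬ ∃ (i : ℕ) (hi : i < N.length), ∃ l g ρ l',
          (N.get ⟨i, hi⟩).1.UTr l g ELab.tau ρ l' ∧
          s (N.get ⟨i, hi⟩).2 = some (Sum.inr l) ∧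
          restrictV s (N.get ⟨i, hi⟩).1.V ∈ g) :
      NTATr X N s (Act.delay d) (oplus X s d)
  | bcst {s : Valn Var Data} {i : ℕ} (hi : i < N.length)
      {l l' : Data} {g : Set (Valn Var Data)} {ρ : Valn Var Data → Valn Var Data}
      {δ : BCh} (ρs : ℕ → Valn Var Data → Valn Var Data) (ls' : ℕ → Data)
      (hs : s ∈ NTAstates N)
      (hl : s (N.get ⟨i, hi⟩).2 = some (Sum.inr l))
      (ht : (N.get ⟨i, hi⟩).1.Tr l g (ELab.bsend δ) ρ l')
      (hg : restrictV s (N.get ⟨i, hi⟩).1.V ∈ g)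
      (hrecv : ∀ j (hj : j < N.length), RSmem N δ i s j →
          ∃ lj gj, s (N.get ⟨j, hj⟩).2 = some (Sum.inr lj) ∧
            (N.get ⟨j, hj⟩).1.Tr lj gj (ELab.brecv δ) (ρs j) (ls' j) ∧
            restrictV s (N.get ⟨j, hj⟩).1.V ∈ gj)
      (hcomm : noneCommitted N s ∨ l ∈ (N.get ⟨i, hi⟩).1.K ∨
          ∃ j, ∃ (hj : j < N.length), RSmem N δ i s j ∧
            ∃ lj ∈ (N.get ⟨j, hj⟩).1.K, s (N.get ⟨j, hj⟩).2 = some (Sum.inr lj))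
      (hs' : bcastLocs N δ i s ls'
          (updV (bcastUpds N δ i s ρs (applyC (N.get ⟨i, hi⟩) ρ s))
            (single (N.get ⟨i, hi⟩).2 (Sum.inr l'))) ∈ NTAstates N) :
      NTATr X N s Act.tau
        (bcastLocs N δ i s ls'
          (updV (bcastUpds N δ i s ρs (applyC (N.get ⟨i, hi⟩) ρ s))
            (single (N.get ⟨i, hi⟩).2 (Sum.inr l'))))

/-- Well-formedness of a network: components satisfy Axioms VII–XI, are pairwise
compatible, and the location variables are fresh and pairwise distinct. -/
def NTAok (X : Set Var) (N : List (Comp Var Data BCh CCh)) : Prop :=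
  (∀ c ∈ N, TAok X c.1) ∧
  N.Pairwise (fun c c' => c.1.H ∩ c'.1.V = ∅ ∧ c'.1.H ∩ c.1.V = ∅ ∧
    compatV c.1.v0 c'.1.v0) ∧
  (∀ c ∈ N, ∀ c' ∈ N, c.2 ∉ c'.1.V) ∧
  N.Pairwise (fun c c' => c.2 ≠ c'.2)

/-- Reachability in the non-compositional semantics of a network. -/
def Reach (X : Set Var) (N : List (Comp Var Data BCh CCh)) (s : Valn Var Data) : Prop :=
  Relation.ReflTransGen (fun u v => ∃ a, NTATr X N u a v) (NTAinit N) s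

/-! ### Auxiliary lemmas for Theorem 3 -/

section Aux

variable {α β : Type*}

lemma override_apply (f g : α → Option β) (x : α) :
    override f g x = if f x = none then g x else f x := by
  simp only [override, dom, Set.mem_setOf_eq]
  by_cases h : f x = none <;> simp [h]

lemma updV_apply (f g : α → Option β) (x : α) :
    updV f g x = if f x = none then none else if g x = none then f x else g x := by
  simp only [updV, restrictV, dom, Set.mem_setOf_eq, override_apply]
  by_cases h : f x = none <;> by_cases h' : g x = none <;> simp [h, h']

lemma restrictV_apply (f : α → Option β) (X : Set α) (x : α) :
    restrictV f X x = if x ∈ X then f x else none := rfl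

lemma mem_dom_iff {f : α → Option β} {x : α} : x ∈ dom f ↔ f x ≠ none := Iff.rfl

lemma compatV_symm {f g : α → Option β} (h : compatV f g) : compatV g f := by
  intro x hx; exact (h x ⟨hx.2, hx.1⟩).symm

lemma override_comm {f g : α → Option β} (h : compatV f g) : override f g = override g f := by
  funext x
  rw [override_apply, override_apply]
  by_cases hf : f x = none <;> by_cases hg : g x = none
  · simp [hf, hg]
  · simp [hf, hg]
  · simp [hf, hg]
  · rw [if_neg hf, if_neg hg]; exact h x ⟨hf, hg⟩

lemma updV_none_iff {f g : α → Option β} {x : α} : updV f g x = none ↔ f x = none := by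
  rw [updV_apply]
  by_cases h : f x = none <;> by_cases h' : g x = none <;> simp [h, h']

lemma compat_updV (f g : α → Option β) : compatV f (updV g f) := by
  intro x hx
  have h1 : f x ≠ none := hx.1
  have h2 : g x ≠ none := by
    intro h
    exact hx.2 (by rw [updV_apply, if_pos h])
  rw [updV_apply, if_neg h2, if_neg h1]

lemma override_updV (f g : α → Option β) : override f (updV g f) = override f g := by
  funext x
  rw [override_apply, override_apply, updV_apply]
  by_cases hf : f x = none <;> by_cases hg : g x = none <;> simp [hf, hg]

lemma updV_congr {f g g' : α → Option β} (h : ∀ x, f x ≠ none → g x = g' x) :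
    updV f g = updV f g' := by
  funext x
  rw [updV_apply, updV_apply]
  by_cases hf : f x = none
  · simp [hf]
  · rw [if_neg hf, if_neg hf, h x hf]

lemma dom_restrictV {f : α → Option β} {E : Set α} (h : ∀ x ∈ E, f x ≠ none) :
    dom (restrictV f E) = E := by
  ext x
  simp only [dom, Set.mem_setOf_eq, restrictV]
  by_cases hx : x ∈ E
  · simp [hx, h x hx]
  · simp [hx]

lemma restrictV_eq_apply {f g : α → Option β} {E : Set α}
    (h : restrictV f E = restrictV g E) {x : α} (hx : x ∈ E) : f x = g x := by
  have := congrFun h x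
  rwa [restrictV_apply, restrictV_apply, if_pos hx, if_pos hx] at this

lemma updV_updV_restrictV {f g : α → Option β} {E : Set α}
    (h1 : ∀ x, g x ≠ none → f x ≠ none → x ∈ E) :
    updV (updV f g) (restrictV f E) = f := by
  funext x
  simp only [updV_apply, restrictV_apply]
  by_cases hf : f x = none
  · simp [hf]
  · by_cases hg : g x = none
    · by_cases hE : x ∈ E <;> simp [hf, hg, hE]
    · have hE : x ∈ E := h1 x hg hf
      simp [hf, hg, hE]

lemma exists_extUpd {f g : α → Option β} {E : Set α}
    (h1 : ∀ x, g x ≠ none → f x ≠ none → x ∈ E) (h2 : ∀ x ∈ E, f x ≠ none) :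
    ∃ u : α → Option β, dom u = E ∧ updV f g = updV f u := by
  classical
  refine ⟨fun x => if x ∈ E then (if g x = none then f x else g x) else none, ?_, ?_⟩
  · ext x
    simp only [dom, Set.mem_setOf_eq]
    by_cases hx : x ∈ E
    · by_cases hg : g x = none <;> simp [hx, hg, h2 x hx]
    · simp [hx]
  · funext x
    rw [updV_apply, updV_apply]
    by_cases hf : f x = none
    · simp [hf]
    · rw [if_neg hf, if_neg hf]
      by_cases hx : x ∈ E
      · by_cases hg : g x = none
        · simp [hx, hg, h2 x hx]
        · simp [hx, hg]
      · have hg : g x = none := by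
          by_contra hg
          exact hx (h1 x hg hf)
        simp [hx, hg]

lemma decomp_unique {r r₀ t t₀ : α → Option β}
    (hdr : dom r₀ = dom r) (hdt : dom t₀ = dom t)
    (hc₀ : compatV r₀ t₀) (hc : compatV r t)
    (he : override r₀ t₀ = override r t) : r₀ = r ∧ t₀ = t := by
  have hdr' : ∀ x, (r₀ x = none ↔ r x = none) := by
    intro x
    have := Set.ext_iff.mp hdr x
    simp only [mem_dom_iff] at this
    rcases this with ⟨h1, h2⟩
    constructor
    · intro h; by_contra h'; exact (h2 h') h
    · intro h; by_contra h'; exact (h1 h') h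
  have hdt' : ∀ x, (t₀ x = none ↔ t x = none) := by
    intro x
    have := Set.ext_iff.mp hdt x
    simp only [mem_dom_iff] at this
    rcases this with ⟨h1, h2⟩
    constructor
    · intro h; by_contra h'; exact (h2 h') h
    · intro h; by_contra h'; exact (h1 h') h
  have her : r₀ = r := by
    funext x
    have hx := congrFun he x
    rw [override_apply, override_apply] at hx
    by_cases h : r₀ x = none
    · rw [h, ((hdr' x).mp h)]
    · rwa [if_neg h, if_neg (fun h' => h ((hdr' x).mpr h'))] at hx
  refine ⟨her, ?_⟩
  funext x
  have hx := congrFun he x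
  rw [override_apply, override_apply] at hx
  by_cases h : t₀ x = none
  · rw [h, ((hdt' x).mp h)]
  · by_cases h' : r₀ x = none
    · rwa [if_pos h', if_pos (her ▸ h')] at hx
    · have e1 : r₀ x = t₀ x := hc₀ x ⟨h', h⟩
      have e2 : r x = t x := hc x ⟨her ▸ h', fun ht' => h ((hdt' x).mpr ht')⟩
      rw [← e1, ← e2, ← her]

lemma updV_override_decomp {r t u : α → Option β} {Er Et : Set α}
    (hEr : ∀ x ∈ Er, r x ≠ none) (hEt : ∀ x ∈ Et, t x ≠ none)
    (hsh : ∀ x, r x ≠ none → t x ≠ none → x ∈ Er)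
    (hu : ∀ x, u x ≠ none ↔ (x ∈ Er ∨ x ∈ Et)) :
    updV (override r t) u =
      override (updV r (restrictV u Er)) (updV t (restrictV u Et)) := by
  classical
  funext x
  simp only [updV_apply, override_apply, restrictV_apply]
  by_cases hr : r x = none
  · by_cases ht : t x = none
    · simp [hr, ht, updV_apply]
    · by_cases hx : x ∈ Et
      · have hux : u x ≠ none := (hu x).mpr (Or.inr hx)
        simp [hr, ht, hx, hux]
      · have hux : u x = none := by
          by_contra h
          rcases (hu x).mp h with h' | h'
          · exact (hEr x h') hr
          · exact hx h'
        simp [hr, ht, hx, hux]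
  · by_cases hx : x ∈ Er
    · have hux : u x ≠ none := (hu x).mpr (Or.inl hx)
      simp [hr, hx, hux]
    · have hux : u x = none := by
        by_contra h
        rcases (hu x).mp h with h' | h'
        · exact hx h'
        · exact hx (hsh x hr (hEt x h'))
      simp [hr, hx, hux]

lemma compat_updV_restrictV {r t u : α → Option β} {Er Et : Set α}
    (hc : compatV r t)
    (hsh : ∀ x, r x ≠ none → t x ≠ none → x ∈ Er ∧ x ∈ Et) :
    compatV (updV r (restrictV u Er)) (updV t (restrictV u Et)) := by
  classical
  intro x hx
  have hr : r x ≠ none := fun h => hx.1 (updV_none_iff.mpr h)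
  have ht : t x ≠ none := fun h => hx.2 (updV_none_iff.mpr h)
  obtain ⟨h1, h2⟩ := hsh x hr ht
  have hct := hc x ⟨hr, ht⟩
  simp only [updV_apply, restrictV_apply]
  by_cases hux : u x = none <;> simp [hr, ht, h1, h2, hux, hct]

lemma dom_updV (f g : α → Option β) : dom (updV f g) = dom f := by
  ext x
  simp only [mem_dom_iff, not_iff_not.mpr (updV_none_iff (f := f) (g := g) (x := x))]

end Aux

section Thm3

lemma V_left {T : PreTTSB Var Data BCh CCh} {x : Var} (h : x ∈ T.E) : x ∈ T.V :=
  Or.inl h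

lemma V_cases {T : PreTTSB Var Data BCh CCh} {x : Var} (h : x ∈ T.V) :
    x ∈ T.E ∨ x ∈ T.H := h

lemma no_comm_delay {X : Set Var} {T : PreTTSB Var Data BCh CCh} (h : IsTTSB X T)
    {s t : Valn Var Data} {d : NNReal} (htr : T.Tr true s (Act.delay d) t) : False := by
  rcases h.axI htr htr with hs | ⟨he, _⟩
  · exact hs
  · exact nomatch he

lemma state_ne_none {X : Set Var} {T : PreTTSB Var Data BCh CCh} (h : IsTTSB X T)
    {r : Valn Var Data} (hr : r ∈ T.S) {x : Var} (hx : x ∈ T.E) : r x ≠ none :=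
  mem_dom_iff.mp ((h.statesDom r hr).symm ▸ V_left hx)

lemma state_mem_V {X : Set Var} {T : PreTTSB Var Data BCh CCh} (h : IsTTSB X T)
    {r : Valn Var Data} (hr : r ∈ T.S) {x : Var} (hx : r x ≠ none) : x ∈ T.V :=
  (h.statesDom r hr) ▸ (hx : x ∈ dom r)

lemma witness_left {X : Set Var} {T1 T2 T3 : PreTTSB Var Data BCh CCh}
    (h1 : IsTTSB X T1) (h2 : IsTTSB X T2) (h3 : IsTTSB X T3)
    (hE : T1.E = T2.E)
    (d13 : ∀ x, x ∈ T1.H → x ∈ T3.V → False)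
    (d23 : ∀ x, x ∈ T2.H → x ∈ T3.V → False)
    (d31 : ∀ x, x ∈ T3.H → x ∈ T1.V → False)
    {r' s' t : Valn Var Data} (hr' : r' ∈ T1.S) (hs' : s' ∈ T2.S) (ht : t ∈ T3.S)
    (hext : restrictV r' T1.E = restrictV s' T2.E) :
    updV t r' = updV t s' ∧ updV t r' ∈ T3.S ∧
    compatV r' (updV t r') ∧ compatV s' (updV t r') ∧
    override r' (updV t r') = override r' t ∧ override s' (updV t r') = override s' t := by
  rw [← hE] at hext
  have sh1 : ∀ x, r' x ≠ none → t x ≠ none → x ∈ T1.E := by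
    intro x hx hx'
    rcases V_cases (state_mem_V h1 hr' hx) with h | h
    · exact h
    · exact absurd (state_mem_V h3 ht hx') (fun hv => d13 x h hv)
  have sh2 : ∀ x, s' x ≠ none → t x ≠ none → x ∈ T2.E := by
    intro x hx hx'
    rcases V_cases (state_mem_V h2 hs' hx) with h | h
    · exact h
    · exact absurd (state_mem_V h3 ht hx') (fun hv => d23 x h hv)
  have heq : updV t r' = updV t s' := by
    apply updV_congr
    intro x hxt
    by_cases hr : r' x = none
    · by_cases hs : s' x = none
      · rw [hr, hs]
      · exfalso
        have hxe : x ∈ T1.E := hE ▸ sh2 x hs hxt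
        exact (state_ne_none h1 hr' hxe) hr
    · exact restrictV_eq_apply hext (sh1 x hr hxt)
  have hmem : updV t r' ∈ T3.S := by
    have sh3 : ∀ x, r' x ≠ none → t x ≠ none → x ∈ T3.E := by
      intro x hx hx'
      rcases V_cases (state_mem_V h3 ht hx') with h | h
      · exact h
      · exact absurd (state_mem_V h1 hr' hx) (fun hv => d31 x h hv)
    obtain ⟨u, hu1, hu2⟩ := exists_extUpd (f := t) (g := r') (E := T3.E) sh3
      (fun x hx => state_ne_none h3 ht hx)
    rw [hu2]
    exact h3.axII u ht hu1
  exact ⟨heq, hmem, compat_updV r' t, heq ▸ compat_updV s' t,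
    override_updV r' t, heq ▸ override_updV s' t⟩

lemma witness_right {X : Set Var} {T1 T2 T3 : PreTTSB Var Data BCh CCh}
    (h1 : IsTTSB X T1) (h2 : IsTTSB X T2) (h3 : IsTTSB X T3)
    (hE : T1.E = T2.E)
    (d13 : ∀ x, x ∈ T1.H → x ∈ T3.V → False)
    (d23 : ∀ x, x ∈ T2.H → x ∈ T3.V → False)
    {r s t' : Valn Var Data} (hr : r ∈ T1.S) (hs : s ∈ T2.S) (ht' : t' ∈ T3.S)
    (hext : restrictV r T1.E = restrictV s T2.E) :
    ∃ u, dom u = T1.E ∧ updV r t' = updV r u ∧ updV s t' = updV s u := by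
  classical
  rw [← hE] at hext
  have sh1 : ∀ x, r x ≠ none → t' x ≠ none → x ∈ T1.E := by
    intro x hx hx'
    rcases V_cases (state_mem_V h1 hr hx) with h | h
    · exact h
    · exact absurd (state_mem_V h3 ht' hx') (fun hv => d13 x h hv)
  have sh2 : ∀ x, s x ≠ none → t' x ≠ none → x ∈ T1.E := by
    intro x hx hx'
    rcases V_cases (state_mem_V h2 hs hx) with h | h
    · exact hE ▸ h
    · exact absurd (state_mem_V h3 ht' hx') (fun hv => d23 x h hv)
  refine ⟨fun x => if x ∈ T1.E then (if t' x = none then r x else t' x) else none, ?_, ?_, ?_⟩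
  · ext x
    simp only [dom, Set.mem_setOf_eq]
    by_cases hx : x ∈ T1.E
    · by_cases ht : t' x = none <;> simp [hx, ht, state_ne_none h1 hr hx]
    · simp [hx]
  · funext x
    rw [updV_apply, updV_apply]
    by_cases hr' : r x = none
    · simp [hr']
    · rw [if_neg hr', if_neg hr']
      by_cases hx : x ∈ T1.E
      · by_cases ht : t' x = none
        · simp [hx, ht, state_ne_none h1 hr hx]
        · simp [hx, ht]
      · have ht : t' x = none := by
          by_contra h
          exact hx (sh1 x hr' h)
        simp [hx, ht]
  · funext x
    rw [updV_apply, updV_apply]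
    by_cases hs' : s x = none
    · simp [hs']
    · rw [if_neg hs', if_neg hs']
      by_cases hx : x ∈ T1.E
      · by_cases ht : t' x = none
        · have hrx : r x ≠ none := state_ne_none h1 hr hx
          have heq : r x = s x := restrictV_eq_apply hext hx
          simp [hx, ht, ← heq, hrx]
        · simp [hx, ht]
      · have ht : t' x = none := by
          by_contra h
          exact hx (sh2 x hs' h)
        simp [hx, ht]

lemma comm_par_iff {X : Set Var} {A B : PreTTSB Var Data BCh CCh}
    (hA : IsTTSB X A) (hB : IsTTSB X B)
    (dAB : ∀ x, x ∈ A.H → x ∈ B.V → False)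
    (dBA : ∀ x, x ∈ B.H → x ∈ A.V → False)
    {r t : Valn Var Data} (hr : r ∈ A.S) (ht : t ∈ B.S) (hc : compatV r t) :
    (par A B).Comm (override r t) ↔ (A.Comm r ∨ B.Comm t) := by
  have shA : ∀ (w : Valn Var Data), w ∈ B.S → ∀ x, r x ≠ none → w x ≠ none → x ∈ A.E := by
    intro w hw x hx hx'
    rcases V_cases (state_mem_V hA hr hx) with h | h
    · exact h
    · exact absurd (state_mem_V hB hw hx') (fun hv => dAB x h hv)
  have shB : ∀ (w : Valn Var Data), w ∈ A.S → ∀ x, w x ≠ none → t x ≠ none → x ∈ B.E := by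
    intro w hw x hx hx'
    rcases V_cases (state_mem_V hB ht hx') with h | h
    · exact h
    · exact absurd (state_mem_V hA hw hx) (fun hv => dBA x h hv)
  have domA : ∀ {w : Valn Var Data}, w ∈ A.S → dom w = dom r := by
    intro w hw
    rw [hA.statesDom w hw, hA.statesDom r hr]
  have domB : ∀ {w : Valn Var Data}, w ∈ B.S → dom w = dom t := by
    intro w hw
    rw [hB.statesDom w hw, hB.statesDom t ht]
  constructor
  · rintro ⟨a, u, htr⟩
    have key : ∀ (b : Bool) (v w : Valn Var Data), ParTr A B b v a w → b = true →
        v = override r t → A.Comm r ∨ B.Comm t := by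
      intro b v w htr
      cases htr with
      | ext₁ hr0 hs0 hc0 ha ht0 =>
        intro hb hv
        obtain ⟨e1, e2⟩ := decomp_unique (domA hr0) (domB hs0) hc0 hc hv
        exact Or.inl ⟨_, _, hb ▸ e1 ▸ ht0⟩
      | ext₂ hr0 hs0 hc0 ha ht0 =>
        intro hb hv
        obtain ⟨e1, e2⟩ := decomp_unique (domA hr0) (domB hs0) hc0 hc hv
        exact Or.inr ⟨_, _, hb ▸ e2 ▸ ht0⟩
      | tau₁ hr0 hs0 hc0 ht0 hcm =>
        intro hb hv
        obtain ⟨e1, e2⟩ := decomp_unique (domA hr0) (domB hs0) hc0 hc hv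
        exact Or.inl ⟨_, _, hb ▸ e1 ▸ ht0⟩
      | tau₂ hr0 hs0 hc0 ht0 hcm =>
        intro hb hv
        obtain ⟨e1, e2⟩ := decomp_unique (domA hr0) (domB hs0) hc0 hc hv
        exact Or.inr ⟨_, _, hb ▸ e2 ▸ ht0⟩
      | @sync₁ r0 s0 r0' s0' c b0 b0' hr0 hs0 hc0 ht1 ht2 hcm =>
        intro hb hv
        obtain ⟨e1, e2⟩ := decomp_unique (domA hr0) (domB hs0) hc0 hc hv
        rw [e1] at ht1
        rw [e2] at ht2
        rcases Bool.or_eq_true_iff.mp hb with hb' | hb'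
        · exact Or.inl ⟨_, _, hb' ▸ ht1⟩
        · subst hb'
          right
          have hr0' : r0' ∈ A.S := (hA.trMem ht1).2
          have hrw : updV (updV t r0') (restrictV t B.E) = t :=
            updV_updV_restrictV (shB r0' hr0')
          have hdom : dom (restrictV t B.E) = B.E :=
            dom_restrictV (fun x hx => state_ne_none hB ht hx)
          obtain ⟨t2, ht2'⟩ := hB.axIIIc (restrictV t B.E) c hdom ht2
          rw [hrw] at ht2'
          exact ⟨_, _, ht2'⟩
      | @sync₂ r0 s0 r0' s0' c b0 b0' hr0 hs0 hc0 ht1 ht2 hcm =>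
        intro hb hv
        obtain ⟨e1, e2⟩ := decomp_unique (domA hr0) (domB hs0) hc0 hc hv
        rw [e2] at ht1
        rw [e1] at ht2
        rcases Bool.or_eq_true_iff.mp hb with hb' | hb'
        · exact Or.inr ⟨_, _, hb' ▸ ht1⟩
        · subst hb'
          left
          have hs0' : s0' ∈ B.S := (hB.trMem ht1).2
          have hrw : updV (updV r s0') (restrictV r A.E) = r :=
            updV_updV_restrictV (fun x hx hx' => shA s0' hs0' x hx' hx)
          have hdom : dom (restrictV r A.E) = A.E :=
            dom_restrictV (fun x hx => state_ne_none hA hr hx)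
          obtain ⟨r2, ht2'⟩ := hA.axIIIc (restrictV r A.E) c hdom ht2
          rw [hrw] at ht2'
          exact ⟨_, _, ht2'⟩
      | time₁ hr0 hs0 hc0 ht1 ht2 =>
        intro hb _
        exact absurd hb (by simp)
      | time₂ hr0 hs0 hc0 ht1 ht2 =>
        intro hb _
        exact absurd hb (by simp)
      | @snd₁ r0 s0 r0' s0' δ b0 b0' hr0 hs0 hc0 ht1 ht2 =>
        intro hb hv
        obtain ⟨e1, e2⟩ := decomp_unique (domA hr0) (domB hs0) hc0 hc hv
        rw [e1] at ht1
        rw [e2] at ht2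
        rcases Bool.or_eq_true_iff.mp hb with hb' | hb'
        · exact Or.inl ⟨_, _, hb' ▸ ht1⟩
        · subst hb'
          right
          have hr0' : r0' ∈ A.S := (hA.trMem ht1).2
          have hrw : updV (updV t r0') (restrictV t B.E) = t :=
            updV_updV_restrictV (shB r0' hr0')
          have hdom : dom (restrictV t B.E) = B.E :=
            dom_restrictV (fun x hx => state_ne_none hB ht hx)
          obtain ⟨t2, ht2'⟩ := hB.axIIIb (restrictV t B.E) δ hdom ht2
          rw [hrw] at ht2'
          exact ⟨_, _, ht2'⟩
      | @snd₂ r0 s0 r0' s0' δ b0 b0' hr0 hs0 hc0 ht1 ht2 =>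
        intro hb hv
        obtain ⟨e1, e2⟩ := decomp_unique (domA hr0) (domB hs0) hc0 hc hv
        rw [e2] at ht1
        rw [e1] at ht2
        rcases Bool.or_eq_true_iff.mp hb with hb' | hb'
        · exact Or.inr ⟨_, _, hb' ▸ ht1⟩
        · subst hb'
          left
          have hs0' : s0' ∈ B.S := (hB.trMem ht1).2
          have hrw : updV (updV r s0') (restrictV r A.E) = r :=
            updV_updV_restrictV (fun x hx hx' => shA s0' hs0' x hx' hx)
          have hdom : dom (restrictV r A.E) = A.E :=
            dom_restrictV (fun x hx => state_ne_none hA hr hx)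
          obtain ⟨r2, ht2'⟩ := hA.axIIIb (restrictV r A.E) δ hdom ht2
          rw [hrw] at ht2'
          exact ⟨_, _, ht2'⟩
      | @rcv₁ r0 s0 r0' s0' δ b0 b0' hr0 hs0 hc0 ht1 ht2 =>
        intro hb hv
        obtain ⟨e1, e2⟩ := decomp_unique (domA hr0) (domB hs0) hc0 hc hv
        rw [e1] at ht1
        rw [e2] at ht2
        rcases Bool.or_eq_true_iff.mp hb with hb' | hb'
        · exact Or.inl ⟨_, _, hb' ▸ ht1⟩
        · exact Or.inr ⟨_, _, hb' ▸ ht2⟩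
      | @rcv₂ r0 s0 r0' s0' δ b0 b0' hr0 hs0 hc0 ht1 ht2 =>
        intro hb hv
        obtain ⟨e1, e2⟩ := decomp_unique (domA hr0) (domB hs0) hc0 hc hv
        rw [e2] at ht1
        rw [e1] at ht2
        rcases Bool.or_eq_true_iff.mp hb with hb' | hb'
        · exact Or.inr ⟨_, _, hb' ▸ ht1⟩
        · exact Or.inl ⟨_, _, hb' ▸ ht2⟩
    exact key _ _ _ htr rfl rfl
  · rintro (⟨a, r', htr⟩ | ⟨a, t', htr⟩)
    · have hr' : r' ∈ A.S := (hA.trMem htr).2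
      match a, htr with
      | Act.send c, htr => exact ⟨_, _, ParTr.ext₁ (a := Act.send c) hr ht hc trivial htr⟩
      | Act.recv c, htr => exact ⟨_, _, ParTr.ext₁ (a := Act.recv c) hr ht hc trivial htr⟩
      | Act.tau, htr => exact ⟨_, _, ParTr.tau₁ hr ht hc htr (fun _ => rfl)⟩
      | Act.delay d, htr => exact absurd htr (fun h => no_comm_delay hA h)
      | Act.brecv δ, htr =>
        obtain ⟨b', t2, ht2⟩ := hB.axV δ t ht
        have h := ParTr.rcv₁ hr ht hc htr ht2
        rw [Bool.true_or] at h
        exact ⟨_, _, h⟩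
      | Act.bsend δ, htr =>
        obtain ⟨u, hu1, hu2⟩ := exists_extUpd (f := t) (g := r') (E := B.E)
          (shB r' hr') (fun x hx => state_ne_none hB ht hx)
        have hmem : updV t r' ∈ B.S := hu2 ▸ hB.axII u ht hu1
        obtain ⟨b', t2, ht2⟩ := hB.axV δ _ hmem
        have h := ParTr.snd₁ hr ht hc htr ht2
        rw [Bool.true_or] at h
        exact ⟨_, _, h⟩
    · have ht' : t' ∈ B.S := (hB.trMem htr).2
      match a, htr with
      | Act.send c, htr => exact ⟨_, _, ParTr.ext₂ (a := Act.send c) hr ht hc trivial htr⟩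
      | Act.recv c, htr => exact ⟨_, _, ParTr.ext₂ (a := Act.recv c) hr ht hc trivial htr⟩
      | Act.tau, htr => exact ⟨_, _, ParTr.tau₂ hr ht hc htr (fun _ => rfl)⟩
      | Act.delay d, htr => exact absurd htr (fun h => no_comm_delay hB h)
      | Act.brecv δ, htr =>
        obtain ⟨b', r2, ht2⟩ := hA.axV δ r hr
        have h := ParTr.rcv₂ hr ht hc htr ht2
        rw [Bool.true_or] at h
        exact ⟨_, _, h⟩
      | Act.bsend δ, htr =>
        obtain ⟨u, hu1, hu2⟩ := exists_extUpd (f := r) (g := t') (E := A.E)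
          (fun x hx hx' => shA t' ht' x hx' hx)
          (fun x hx => state_ne_none hA hr hx)
        have hmem : updV r t' ∈ A.S := hu2 ▸ hA.axII u hr hu1
        obtain ⟨b', r2, ht2⟩ := hA.axV δ _ hmem
        have h := ParTr.snd₂ hr ht hc htr ht2
        rw [Bool.true_or] at h
        exact ⟨_, _, h⟩

end Thm3

/-- Theorem 3: the timed step simulation preorder is a precongruence for
parallel composition. -/
theorem simLE_par_precongruence (X : Set Var) (T1 T2 T3 : PreTTSB Var Data BCh CCh)
    (h1 : IsTTSB X T1) (h2 : IsTTSB X T2) (h3 : IsTTSB X T3)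
    (hcmp : Comparable T1 T2) (hle : simLE T1 T2)
    (h13 : Compatible T1 T3) (h23 : Compatible T2 T3) :
    simLE (par T1 T3) (par T2 T3) := by
  obtain ⟨R, hR⟩ := hle
  have hE : T1.E = T2.E := hcmp
  have d13 : ∀ x, x ∈ T1.H → x ∈ T3.V → False := fun x hx hx' =>
    Set.eq_empty_iff_forall_notMem.mp h13.1 x ⟨hx, hx'⟩
  have d31 : ∀ x, x ∈ T3.H → x ∈ T1.V → False := fun x hx hx' =>
    Set.eq_empty_iff_forall_notMem.mp h13.2.1 x ⟨hx, hx'⟩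
  have d23 : ∀ x, x ∈ T2.H → x ∈ T3.V → False := fun x hx hx' =>
    Set.eq_empty_iff_forall_notMem.mp h23.1 x ⟨hx, hx'⟩
  have d32 : ∀ x, x ∈ T3.H → x ∈ T2.V → False := fun x hx hx' =>
    Set.eq_empty_iff_forall_notMem.mp h23.2.1 x ⟨hx, hx'⟩
  have shared1 : ∀ {r t : Valn Var Data}, r ∈ T1.S → t ∈ T3.S →
      ∀ x, r x ≠ none → t x ≠ none → x ∈ T1.E := by
    intro r t hr ht x hx hx'
    rcases V_cases (state_mem_V h1 hr hx) with h | h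
    · exact h
    · exact absurd (state_mem_V h3 ht hx') (fun hv => d13 x h hv)
  have shared2 : ∀ {s t : Valn Var Data}, s ∈ T2.S → t ∈ T3.S →
      ∀ x, s x ≠ none → t x ≠ none → x ∈ T1.E := by
    intro s t hs ht x hx hx'
    rcases V_cases (state_mem_V h2 hs hx) with h | h
    · exact hE.symm ▸ h
    · exact absurd (state_mem_V h3 ht hx') (fun hv => d23 x h hv)
  have shared3 : ∀ {r t : Valn Var Data}, r ∈ T1.S → t ∈ T3.S →
      ∀ x, r x ≠ none → t x ≠ none → x ∈ T3.E := by
    intro r t hr ht x hx hx'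
    rcases V_cases (state_mem_V h3 ht hx') with h | h
    · exact h
    · exact absurd (state_mem_V h1 hr hx) (fun hv => d31 x h hv)
  have shared4 : ∀ {s t : Valn Var Data}, s ∈ T2.S → t ∈ T3.S →
      ∀ x, s x ≠ none → t x ≠ none → x ∈ T3.E := by
    intro s t hs ht x hx hx'
    rcases V_cases (state_mem_V h3 ht hx') with h | h
    · exact h
    · exact absurd (state_mem_V h2 hs hx) (fun hv => d32 x h hv)
  refine ⟨fun v w => ∃ r s t, R r s ∧ t ∈ T3.S ∧ compatV r t ∧ compatV s t ∧
    v = override r t ∧ w = override s t, ?_, ?_, ?_, ?_, ?_, ?_⟩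
  · -- mem
    rintro v w ⟨r, s, t, hrs, ht, hcrt, hcst, rfl, rfl⟩
    exact ⟨⟨r, (hR.mem hrs).1, t, ht, hcrt, rfl⟩, ⟨s, (hR.mem hrs).2, t, ht, hcst, rfl⟩⟩
  · -- initR
    exact ⟨T1.init, T2.init, T3.init, hR.initR, h3.initMem, h13.2.2, h23.2.2, rfl, rfl⟩
  · -- extEq
    rintro v w ⟨r, s, t, hrs, ht, hcrt, hcst, rfl, rfl⟩
    have hmr := (hR.mem hrs).1
    have hms := (hR.mem hrs).2
    have hext : restrictV r T1.E = restrictV s T1.E := by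
      have := hR.extEq hrs
      rwa [← hE] at this
    have memE1 : ∀ {x : Var}, x ∈ (par T1 T3).E ↔ (x ∈ T1.E ∨ x ∈ T3.E) :=
      fun {x} => Iff.rfl
    have memE2 : ∀ {x : Var}, x ∈ (par T2 T3).E ↔ (x ∈ T2.E ∨ x ∈ T3.E) :=
      fun {x} => Iff.rfl
    funext x
    rw [restrictV_apply, restrictV_apply]
    by_cases hx1 : x ∈ T1.E
    · rw [if_pos (memE1.mpr (Or.inl hx1)), if_pos (memE2.mpr (Or.inl (hE ▸ hx1))),
        override_apply, override_apply,
        if_neg (state_ne_none h1 hmr hx1), if_neg (state_ne_none h2 hms (hE ▸ hx1))]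
      exact restrictV_eq_apply hext hx1
    · by_cases hx3 : x ∈ T3.E
      · rw [if_pos (memE1.mpr (Or.inr hx3)), if_pos (memE2.mpr (Or.inr hx3)),
          override_apply, override_apply]
        have hr1 : r x = none := by
          by_contra h
          exact hx1 (shared1 hmr ht x h (state_ne_none h3 ht hx3))
        have hs1 : s x = none := by
          by_contra h
          exact hx1 (shared2 hms ht x h (state_ne_none h3 ht hx3))
        rw [if_pos hr1, if_pos hs1]
      · have hxl : x ∉ (par T1 T3).E := fun h => (memE1.mp h).elim hx1 hx3
        have hxr : x ∉ (par T2 T3).E := fun h =>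
          (memE2.mp h).elim (fun h' => hx1 (hE.symm ▸ h')) hx3
        rw [if_neg hxl, if_neg hxr]
  · -- updR
    rintro v w u ⟨r, s, t, hrs, ht, hcrt, hcst, rfl, rfl⟩ hu
    have hmr := (hR.mem hrs).1
    have hms := (hR.mem hrs).2
    have huxt : ∀ x, u x ≠ none ↔ (x ∈ T1.E ∨ x ∈ T3.E) := by
      intro x
      have h0 : dom u = T1.E ∪ T3.E := hu
      have := Set.ext_iff.mp h0 x
      simpa [mem_dom_iff, Set.mem_union] using this
    have hdec1 : updV (override r t) u =
        override (updV r (restrictV u T1.E)) (updV t (restrictV u T3.E)) :=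
      updV_override_decomp (fun x hx => state_ne_none h1 hmr hx)
        (fun x hx => state_ne_none h3 ht hx) (shared1 hmr ht) huxt
    have hdec2 : updV (override s t) u =
        override (updV s (restrictV u T1.E)) (updV t (restrictV u T3.E)) := by
      have := updV_override_decomp (r := s) (t := t) (u := u) (Er := T1.E) (Et := T3.E)
        (fun x hx => state_ne_none h2 hms (hE ▸ hx))
        (fun x hx => state_ne_none h3 ht hx) (shared2 hms ht) huxt
      exact this
    have hu1 : dom (restrictV u T1.E) = T1.E :=
      dom_restrictV (fun x hx => (huxt x).mpr (Or.inl hx))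
    have hu3 : dom (restrictV u T3.E) = T3.E :=
      dom_restrictV (fun x hx => (huxt x).mpr (Or.inr hx))
    refine ⟨_, _, _, hR.updR _ hrs hu1, h3.axII _ ht hu3, ?_, ?_, hdec1, hdec2⟩
    · exact compat_updV_restrictV hcrt
        (fun x hx hx' => ⟨shared1 hmr ht x hx hx', shared3 hmr ht x hx hx'⟩)
    · exact compat_updV_restrictV hcst
        (fun x hx hx' => ⟨shared2 hms ht x hx hx', shared4 hms ht x hx hx'⟩)
  · -- commR
    rintro v w ⟨r, s, t, hrs, ht, hcrt, hcst, rfl, rfl⟩ hcm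
    have hc23 := (comm_par_iff h2 h3 d23 d32 (hR.mem hrs).2 ht hcst).mp hcm
    exact (comm_par_iff h1 h3 d13 d31 (hR.mem hrs).1 ht hcrt).mpr
      (hc23.imp (hR.commR hrs) id)
  · -- stepR
    rintro v w b a v' ⟨r, s, t, hrs, ht, hcrt, hcst, rfl, rfl⟩ htr
    have hmr := (hR.mem hrs).1
    have hms := (hR.mem hrs).2
    have domEq1 : ∀ {w : Valn Var Data}, w ∈ T1.S → dom r = dom w := by
      intro w hw
      rw [h1.statesDom w hw, h1.statesDom r hmr]
    have domEq3 : ∀ {w : Valn Var Data}, w ∈ T3.S → dom t = dom w := by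
      intro w hw
      rw [h3.statesDom w hw, h3.statesDom t ht]
    generalize hveq : override r t = v0 at htr
    cases htr with
    | @ext₁ r0 t0 r0' a0 b0 hr0 ht0 hc0 ha0 htr1 =>
      obtain ⟨e1, e2⟩ := decomp_unique (domEq1 hr0) (domEq3 ht0) hcrt hc0 hveq
      subst e1; subst e2
      rcases hR.stepR hrs htr1 with ⟨s'', hs'', hr''⟩ | ⟨ha', _⟩
      · left
        obtain ⟨heq, htS, hc1, hc2, ho1, ho2⟩ := witness_left h1 h2 h3 hE d13 d23 d31
          (h1.trMem htr1).2 (hR.mem hr'').2 ht (hR.extEq hr'')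
        exact ⟨override s'' t, ParTr.ext₁ hms ht hcst ha0 hs'',
          r0', s'', updV t r0', hr'', htS, hc1, hc2, ho1.symm, ho2.symm⟩
      · exact absurd ha0 (by rw [ha']; exact fun h => h)
    | @ext₂ r0 t0 t0' a0 b0 hr0 ht0 hc0 ha0 htr1 =>
      obtain ⟨e1, e2⟩ := decomp_unique (domEq1 hr0) (domEq3 ht0) hcrt hc0 hveq
      subst e1; subst e2
      left
      have ht0'S : t0' ∈ T3.S := (h3.trMem htr1).2
      obtain ⟨u, hu1, hu2, hu3⟩ := witness_right h1 h2 h3 hE d13 d23 hmr hms ht0'S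
        (hR.extEq hrs)
      have hRu : R (updV r t0') (updV s t0') := by
        rw [hu2, hu3]; exact hR.updR u hrs hu1
      exact ⟨override t0' s, ParTr.ext₂ hms ht hcst ha0 htr1,
        updV r t0', updV s t0', t0', hRu, ht0'S,
        compatV_symm (compat_updV t0' r), compatV_symm (compat_updV t0' s),
        ((override_updV t0' r).symm).trans (override_comm (compat_updV t0' r)),
        ((override_updV t0' s).symm).trans (override_comm (compat_updV t0' s))⟩
    | @tau₁ r0 t0 r0' b0 hr0 ht0 hc0 htr1 hcm =>
      obtain ⟨e1, e2⟩ := decomp_unique (domEq1 hr0) (domEq3 ht0) hcrt hc0 hveq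
      subst e1; subst e2
      rcases hR.stepR hrs htr1 with ⟨s'', hs'', hr''⟩ | ⟨_, hr''⟩
      · left
        obtain ⟨heq, htS, hc1, hc2, ho1, ho2⟩ := witness_left h1 h2 h3 hE d13 d23 d31
          (h1.trMem htr1).2 (hR.mem hr'').2 ht (hR.extEq hr'')
        exact ⟨override s'' t, ParTr.tau₁ hms ht hcst hs'' hcm,
          r0', s'', updV t r0', hr'', htS, hc1, hc2, ho1.symm, ho2.symm⟩
      · right
        refine ⟨rfl, ?_⟩
        obtain ⟨heq, htS, hc1, hc2, ho1, ho2⟩ := witness_left h1 h2 h3 hE d13 d23 d31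
          (h1.trMem htr1).2 hms ht (hR.extEq hr'')
        exact ⟨r0', s, updV t r0', hr'', htS, hc1, hc2, ho1.symm, ho2.symm⟩
    | @tau₂ r0 t0 t0' b0 hr0 ht0 hc0 htr1 hcm =>
      obtain ⟨e1, e2⟩ := decomp_unique (domEq1 hr0) (domEq3 ht0) hcrt hc0 hveq
      subst e1; subst e2
      left
      have ht0'S : t0' ∈ T3.S := (h3.trMem htr1).2
      obtain ⟨u, hu1, hu2, hu3⟩ := witness_right h1 h2 h3 hE d13 d23 hmr hms ht0'S
        (hR.extEq hrs)
      have hRu : R (updV r t0') (updV s t0') := by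
        rw [hu2, hu3]; exact hR.updR u hrs hu1
      exact ⟨override t0' s,
        ParTr.tau₂ hms ht hcst htr1 (fun h => hcm (hR.commR hrs h)),
        updV r t0', updV s t0', t0', hRu, ht0'S,
        compatV_symm (compat_updV t0' r), compatV_symm (compat_updV t0' s),
        ((override_updV t0' r).symm).trans (override_comm (compat_updV t0' r)),
        ((override_updV t0' s).symm).trans (override_comm (compat_updV t0' s))⟩
    | @sync₁ r0 t0 r0' t0' c0 b0 b0' hr0 ht0 hc0 ht1 ht2 hcm =>
      obtain ⟨e1, e2⟩ := decomp_unique (domEq1 hr0) (domEq3 ht0) hcrt hc0 hveq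
      subst e1; subst e2
      rcases hR.stepR hrs ht1 with ⟨s'', hs'', hr''⟩ | ⟨ha', _⟩
      · left
        have hr0'S : r0' ∈ T1.S := (h1.trMem ht1).2
        have hs''S : s'' ∈ T2.S := (hR.mem hr'').2
        obtain ⟨heq, -, -, -, -, -⟩ := witness_left h1 h2 h3 hE d13 d23 d31
          hr0'S hs''S ht (hR.extEq hr'')
        rw [heq] at ht2
        have htr2 := ParTr.sync₁ hms ht hcst hs'' ht2
          (fun h => hcm (h.imp (hR.commR hrs) id))
        have ht0'S : t0' ∈ T3.S := (h3.trMem ht2).2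
        obtain ⟨u, hu1, hu2, hu3⟩ := witness_right h1 h2 h3 hE d13 d23 hr0'S hs''S
          ht0'S (hR.extEq hr'')
        have hRu : R (updV r0' t0') (updV s'' t0') := by
          rw [hu2, hu3]; exact hR.updR u hr'' hu1
        exact ⟨override t0' s'', htr2, updV r0' t0', updV s'' t0', t0', hRu, ht0'S,
          compatV_symm (compat_updV t0' r0'), compatV_symm (compat_updV t0' s''),
          ((override_updV t0' r0').symm).trans (override_comm (compat_updV t0' r0')),
          ((override_updV t0' s'').symm).trans (override_comm (compat_updV t0' s''))⟩
      · exact nomatch ha'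
    | @sync₂ r0 t0 r0' t0' c0 b0 b0' hr0 ht0 hc0 ht1 ht2 hcm =>
      obtain ⟨e1, e2⟩ := decomp_unique (domEq1 hr0) (domEq3 ht0) hcrt hc0 hveq
      subst e1; subst e2
      left
      have ht0'S : t0' ∈ T3.S := (h3.trMem ht1).2
      obtain ⟨u, hu1, hu2, hu3⟩ := witness_right h1 h2 h3 hE d13 d23 hmr hms ht0'S
        (hR.extEq hrs)
      have hRu : R (updV r t0') (updV s t0') := by
        rw [hu2, hu3]; exact hR.updR u hrs hu1
      rcases hR.stepR hRu ht2 with ⟨s'', hs'', hr''⟩ | ⟨ha', _⟩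
      · have htr2 := ParTr.sync₂ hms ht hcst ht1 hs''
          (fun h => hcm (h.imp id (hR.commR hrs)))
        obtain ⟨heq, htS, hc1, hc2, ho1, ho2⟩ := witness_left h1 h2 h3 hE d13 d23 d31
          (h1.trMem ht2).2 (hR.mem hr'').2 ht0'S (hR.extEq hr'')
        exact ⟨override s'' t0', htr2, r0', s'', updV t0' r0', hr'', htS, hc1, hc2,
          ho1.symm, ho2.symm⟩
      · exact nomatch ha'
    | @time₁ r0 t0 r0' t0' d0 hr0 ht0 hc0 ht1 ht2 =>
      obtain ⟨e1, e2⟩ := decomp_unique (domEq1 hr0) (domEq3 ht0) hcrt hc0 hveq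
      subst e1; subst e2
      rcases hR.stepR hrs ht1 with ⟨s'', hs'', hr''⟩ | ⟨ha', _⟩
      · left
        have htr2 := ParTr.time₁ hms ht hcst hs'' ht2
        obtain ⟨heq, htS, hc1, hc2, ho1, ho2⟩ := witness_left h1 h2 h3 hE d13 d23 d31
          (h1.trMem ht1).2 (hR.mem hr'').2 (h3.trMem ht2).2 (hR.extEq hr'')
        exact ⟨override s'' t0', htr2, r0', s'', updV t0' r0', hr'', htS, hc1, hc2,
          ho1.symm, ho2.symm⟩
      · exact nomatch ha'
    | @time₂ r0 t0 r0' t0' d0 hr0 ht0 hc0 ht1 ht2 =>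
      obtain ⟨e1, e2⟩ := decomp_unique (domEq1 hr0) (domEq3 ht0) hcrt hc0 hveq
      subst e1; subst e2
      rcases hR.stepR hrs ht2 with ⟨s'', hs'', hr''⟩ | ⟨ha', _⟩
      · left
        have htr2 := ParTr.time₂ hms ht hcst ht1 hs''
        have ht0'S : t0' ∈ T3.S := (h3.trMem ht1).2
        obtain ⟨u, hu1, hu2, hu3⟩ := witness_right h1 h2 h3 hE d13 d23
          (h1.trMem ht2).2 (hR.mem hr'').2 ht0'S (hR.extEq hr'')
        have hRu : R (updV r0' t0') (updV s'' t0') := by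
          rw [hu2, hu3]; exact hR.updR u hr'' hu1
        exact ⟨override t0' s'', htr2, updV r0' t0', updV s'' t0', t0', hRu, ht0'S,
          compatV_symm (compat_updV t0' r0'), compatV_symm (compat_updV t0' s''),
          ((override_updV t0' r0').symm).trans (override_comm (compat_updV t0' r0')),
          ((override_updV t0' s'').symm).trans (override_comm (compat_updV t0' s''))⟩
      · exact nomatch ha'
    | @snd₁ r0 t0 r0' t0' δ0 b0 b0' hr0 ht0 hc0 ht1 ht2 =>
      obtain ⟨e1, e2⟩ := decomp_unique (domEq1 hr0) (domEq3 ht0) hcrt hc0 hveq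
      subst e1; subst e2
      rcases hR.stepR hrs ht1 with ⟨s'', hs'', hr''⟩ | ⟨ha', _⟩
      · left
        have hr0'S : r0' ∈ T1.S := (h1.trMem ht1).2
        have hs''S : s'' ∈ T2.S := (hR.mem hr'').2
        obtain ⟨heq, -, -, -, -, -⟩ := witness_left h1 h2 h3 hE d13 d23 d31
          hr0'S hs''S ht (hR.extEq hr'')
        rw [heq] at ht2
        have htr2 := ParTr.snd₁ hms ht hcst hs'' ht2
        obtain ⟨heq2, htS, hc1, hc2, ho1, ho2⟩ := witness_left h1 h2 h3 hE d13 d23 d31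
          hr0'S hs''S (h3.trMem ht2).2 (hR.extEq hr'')
        exact ⟨override s'' t0', htr2, r0', s'', updV t0' r0', hr'', htS, hc1, hc2,
          ho1.symm, ho2.symm⟩
      · exact nomatch ha'
    | @snd₂ r0 t0 r0' t0' δ0 b0 b0' hr0 ht0 hc0 ht1 ht2 =>
      obtain ⟨e1, e2⟩ := decomp_unique (domEq1 hr0) (domEq3 ht0) hcrt hc0 hveq
      subst e1; subst e2
      left
      have ht0'S : t0' ∈ T3.S := (h3.trMem ht1).2
      obtain ⟨u, hu1, hu2, hu3⟩ := witness_right h1 h2 h3 hE d13 d23 hmr hms ht0'S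
        (hR.extEq hrs)
      have hRu : R (updV r t0') (updV s t0') := by
        rw [hu2, hu3]; exact hR.updR u hrs hu1
      rcases hR.stepR hRu ht2 with ⟨s'', hs'', hr''⟩ | ⟨ha', _⟩
      · have htr2 := ParTr.snd₂ hms ht hcst ht1 hs''
        obtain ⟨u2, hu1', hu2', hu3'⟩ := witness_right h1 h2 h3 hE d13 d23
          (h1.trMem ht2).2 (hR.mem hr'').2 ht0'S (hR.extEq hr'')
        have hRu2 : R (updV r0' t0') (updV s'' t0') := by
          rw [hu2', hu3']; exact hR.updR u2 hr'' hu1'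
        exact ⟨override t0' s'', htr2, updV r0' t0', updV s'' t0', t0', hRu2, ht0'S,
          compatV_symm (compat_updV t0' r0'), compatV_symm (compat_updV t0' s''),
          ((override_updV t0' r0').symm).trans (override_comm (compat_updV t0' r0')),
          ((override_updV t0' s'').symm).trans (override_comm (compat_updV t0' s''))⟩
      · exact nomatch ha'
    | @rcv₁ r0 t0 r0' t0' δ0 b0 b0' hr0 ht0 hc0 ht1 ht2 =>
      obtain ⟨e1, e2⟩ := decomp_unique (domEq1 hr0) (domEq3 ht0) hcrt hc0 hveq
      subst e1; subst e2
      rcases hR.stepR hrs ht1 with ⟨s'', hs'', hr''⟩ | ⟨ha', _⟩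
      · left
        have htr2 := ParTr.rcv₁ hms ht hcst hs'' ht2
        obtain ⟨heq, htS, hc1, hc2, ho1, ho2⟩ := witness_left h1 h2 h3 hE d13 d23 d31
          (h1.trMem ht1).2 (hR.mem hr'').2 (h3.trMem ht2).2 (hR.extEq hr'')
        exact ⟨override s'' t0', htr2, r0', s'', updV t0' r0', hr'', htS, hc1, hc2,
          ho1.symm, ho2.symm⟩
      · exact nomatch ha'
    | @rcv₂ r0 t0 r0' t0' δ0 b0 b0' hr0 ht0 hc0 ht1 ht2 =>
      obtain ⟨e1, e2⟩ := decomp_unique (domEq1 hr0) (domEq3 ht0) hcrt hc0 hveq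
      subst e1; subst e2
      rcases hR.stepR hrs ht2 with ⟨s'', hs'', hr''⟩ | ⟨ha', _⟩
      · left
        have htr2 := ParTr.rcv₂ hms ht hcst ht1 hs''
        have ht0'S : t0' ∈ T3.S := (h3.trMem ht1).2
        obtain ⟨u, hu1, hu2, hu3⟩ := witness_right h1 h2 h3 hE d13 d23
          (h1.trMem ht2).2 (hR.mem hr'').2 ht0'S (hR.extEq hr'')
        have hRu : R (updV r0' t0') (updV s'' t0') := by
          rw [hu2, hu3]; exact hR.updR u hr'' hu1
        exact ⟨override t0' s'', htr2, updV r0' t0', updV s'' t0', t0', hRu, ht0'S,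
          compatV_symm (compat_updV t0' r0'), compatV_symm (compat_updV t0' s''),
          ((override_updV t0' r0').symm).trans (override_comm (compat_updV t0' r0')),
          ((override_updV t0' s'').symm).trans (override_comm (compat_updV t0' s''))⟩
      · exact nomatch ha'

end TTSBpaper
end
end

section
/- The timed step simulation preorder is a precongruence for restriction under a side condition: let T₁ and T₂ be comparable TTSBs with T₁ ≼ T₂, and let C ⊆ Δ ∪ 𝒞 ∪ E₁. If for every committed state r of T₁ there exists an action a ∈ Act − {δ?, c!, c? | δ ∈ C ∩ Δ, c ∈ C ∩ 𝒞} such that r →^{a,1} in T₁, then T₁\C ≼ T₂\C. -/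
open Classical

noncomputable section

namespace TTSBpaper

variable {Var Data BCh CCh : Type}

/-- Theorem 4: the timed step simulation preorder is a precongruence for
restriction, under the side condition that every committed state of T1 has an
outgoing committed transition whose label is not removed by the restriction. -/
theorem simLE_restr_precongruence (X : Set Var) (T1 T2 : PreTTSB Var Data BCh CCh)
    (h1 : IsTTSB X T1) (h2 : IsTTSB X T2)
    (hcmp : Comparable T1 T2) (hle : simLE T1 T2)
    (Cb : Set BCh) (Cc : Set CCh) (Ce : Set Var) (hCe : Ce ⊆ T1.E)
    (hside : ∀ r ∈ T1.S, T1.Comm r →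
        ∃ a r', T1.Tr true r a r' ∧ ¬ Act.removedBy Cb Cc a) :
    simLE (restr T1 Cb Cc Ce) (restr T2 Cb Cc Ce) := by
  obtain ⟨R, hR⟩ := hle
  have hE : T1.E = T2.E := hcmp
  have hExt : ∀ {r s : Valn Var Data}, R r s → ∀ x ∈ T1.E, r x = s x := by
    intro r s hrs x hx
    have h := congrFun (hR.extEq hrs) x
    have hx2 : x ∈ T2.E := hE ▸ hx
    simpa [restrictV, hx, hx2] using h
  refine ⟨R, ?_, hR.initR, ?_, ?_, ?_, ?_⟩
  · exact fun {r s} h => hR.mem h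
  · -- extEq
    intro r s hrs
    funext x
    by_cases hx : x ∈ T1.E \ Ce
    · have hx2 : x ∈ T2.E \ Ce := ⟨hE ▸ hx.1, hx.2⟩
      show restrictV r (T1.E \ Ce) x = restrictV s (T2.E \ Ce) x
      simp only [restrictV, if_pos hx, if_pos hx2]
      exact hExt hrs x hx.1
    · have hx2 : x ∉ T2.E \ Ce := fun h => hx ⟨hE ▸ h.1, h.2⟩
      show restrictV r (T1.E \ Ce) x = restrictV s (T2.E \ Ce) x
      simp only [restrictV, if_neg hx, if_neg hx2]
  · -- updR
    intro r s u hrs hu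
    have hu1 : dom u = T1.E \ Ce := hu
    have hrS : r ∈ T1.S := (hR.mem hrs).1
    have hdomr : dom r = T1.V := h1.statesDom r hrS
    have hCedom : ∀ x ∈ Ce, r x ≠ none := by
      intro x hx
      have : x ∈ dom r := by
        rw [hdomr]; exact Or.inl (hCe hx)
      exact this
    set u' : Valn Var Data := override u (restrictV r Ce) with hu'def
    have hdu' : dom u' = T1.E := by
      ext x
      constructor
      · intro hx
        by_cases hxu : x ∈ dom u
        · exact (hu1 ▸ hxu).1
        · have : u' x = restrictV r Ce x := by
            simp only [u', override, if_neg hxu]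
          by_cases hxc : x ∈ Ce
          · exact hCe hxc
          · exfalso; apply hx
            rw [this]; simp [restrictV, hxc]
      · intro hx
        by_cases hxc : x ∈ Ce
        · by_cases hxu : x ∈ dom u
          · show u' x ≠ none
            simp only [u', override, if_pos hxu]; exact hxu
          · show u' x ≠ none
            simp only [u', override, if_neg hxu, restrictV, if_pos hxc]
            exact hCedom x hxc
        · have hxu : x ∈ dom u := by rw [hu1]; exact ⟨hx, hxc⟩
          show u' x ≠ none
          simp only [u', override, if_pos hxu]; exact hxu
    have hov : ∀ (w : Valn Var Data), (∀ x ∈ Ce, r x = w x) →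
        override u' w = override u w := by
      intro w hw
      funext x
      by_cases hxu : x ∈ dom u
      · have hxu' : x ∈ dom u' := by rw [hdu']; exact (hu1 ▸ hxu).1
        simp only [override, if_pos hxu, if_pos hxu', u', if_pos hxu]
      · by_cases hxu' : x ∈ dom u'
        · have hxc : x ∈ Ce := by
            have := hdu' ▸ hxu'
            by_contra hxc
            exact hxu (hu1 ▸ ⟨this, hxc⟩)
          simp only [override, if_pos hxu', if_neg hxu, u', if_neg hxu,
            restrictV, if_pos hxc]
          exact hw x hxc
        · simp only [override, if_neg hxu', if_neg hxu]
    have hur : updV r u' = updV r u := by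
      unfold updV
      rw [hov r (fun x _ => rfl)]
    have hus : updV s u' = updV s u := by
      unfold updV
      rw [hov s (fun x hx => hExt hrs x (hCe hx))]
    have := hR.updR u' hrs hdu'
    rwa [hur, hus] at this
  · -- commR
    intro r s hrs hcomm
    have hs2 : T2.Comm s := by
      obtain ⟨a, t, ht⟩ := hcomm
      rcases ht with ⟨ht, -⟩ | ⟨-, δ, -, ht, -⟩
      · exact ⟨a, t, ht⟩
      · exact ⟨_, t, ht⟩
    have h1c := hR.commR hrs hs2
    obtain ⟨a, r', htr, hrem⟩ := hside r (hR.mem hrs).1 h1c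
    cases a with
    | bsend δ =>
      by_cases hδ : δ ∈ Cb
      · exact ⟨Act.tau, r', Or.inr ⟨rfl, δ, hδ, htr, fun _ => rfl⟩⟩
      · exact ⟨_, r', Or.inl ⟨htr, hδ⟩⟩
    | brecv δ => exact ⟨_, r', Or.inl ⟨htr, hrem⟩⟩
    | send c => exact ⟨_, r', Or.inl ⟨htr, hrem⟩⟩
    | recv c => exact ⟨_, r', Or.inl ⟨htr, hrem⟩⟩
    | tau => exact ⟨_, r', Or.inl ⟨htr, trivial⟩⟩
    | delay d => exact ⟨_, r', Or.inl ⟨htr, trivial⟩⟩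
  · -- stepR
    intro r s b a r' hrs htr
    rcases htr with ⟨ht, hk⟩ | ⟨ha, δ, hδ, ht, hb⟩
    · rcases hR.stepR hrs ht with ⟨s', hts, hR'⟩ | ⟨ha, hR'⟩
      · exact Or.inl ⟨s', Or.inl ⟨hts, hk⟩, hR'⟩
      · exact Or.inr ⟨ha, hR'⟩
    · rcases hR.stepR hrs ht with ⟨s', hts, hR'⟩ | ⟨ha', -⟩
      · refine Or.inl ⟨s', ?_, hR'⟩
        subst ha
        exact Or.inr ⟨rfl, δ, hδ, hts, fun hc => hb (hR.commR hrs hc)⟩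
      · exact absurd ha' (by simp)

end TTSBpaper
end
end
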